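/- arXiv:1911.07057 — 9 statements merged into one kernel-verified Lean document; each statement's English description precedes it below -/
import Mathlib

section
/- For points A, B, C, D in a real vector space V, if Sbtw ℝ A B C and Sbtw ℝ B C D, then Sbtw ℝ A B D and Sbtw ℝ A C D. (The second transitivity law for strict betweenness, due to Moore, used in Hilbert's Theorem 5.) -/
/-- Second transitivity law for strict betweenness (Moore). -/
theorem sbtw_trans_second {V : Type*} [AddCommGroup V] [Module ℝ V]
    (A B C D : V) (h₁ : Sbtw ℝ A B C) (h₂ : Sbtw ℝ B C D) :
    Sbtw ℝ A B D ∧ Sbtw ℝ A C D := by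
  obtain ⟨t, ht, hB⟩ := h₁.mem_image_Ioo
  obtain ⟨s, hs, hC⟩ := h₂.mem_image_Ioo
  rw [AffineMap.lineMap_apply_module] at hB hC
  obtain ⟨ht0, ht1⟩ := ht
  obtain ⟨hs0, hs1⟩ := hs
  have hp : (0:ℝ) < 1 - (1 - s) * t := by nlinarith
  have hsp : s < 1 - (1 - s) * t := by nlinarith
  set p : ℝ := 1 - (1 - s) * t with hp_def
  set u : ℝ := s / p with hu_def
  have hu0 : 0 < u := div_pos hs0 hp
  have hu1 : u < 1 := (div_lt_one hp).2 hsp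
  have h2 : C = (1 - s) • ((1 - t) • A + t • C) + s • D := by
    rw [hB]; exact hC.symm
  have hkey : p • (C - A) = s • (D - A) := by
    rw [hp_def]
    linear_combination (norm := module) h2
  have hD : C - A = u • (D - A) := by
    rw [hu_def, div_eq_mul_inv, mul_comm, mul_smul, ← hkey, inv_smul_smul₀ hp.ne']
  have hAD : A ≠ D := by
    intro h
    apply h₁.left_ne_right
    have h0 : C - A = 0 := by rw [hD, ← h, sub_self, smul_zero]
    exact (sub_eq_zero.mp h0).symm
  have hBD : B - A = (t * u) • (D - A) := by
    have : B - A = t • (C - A) := by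
      rw [← hB]; module
    rw [this, hD, smul_smul]
  constructor
  · have := sbtw_lineMap_iff.2 ⟨hAD, ⟨mul_pos ht0 hu0, by nlinarith⟩⟩
    convert this using 1
    rw [AffineMap.lineMap_apply_module]
    have : B = (t * u) • (D - A) + A := by rw [← hBD]; abel
    rw [this]; module
  · have := sbtw_lineMap_iff.2 ⟨hAD, ⟨hu0, hu1⟩⟩
    convert this using 1
    rw [AffineMap.lineMap_apply_module]
    have : C = u • (D - A) + A := by rw [← hD]; abel
    rw [this]; module
end

section
/- Given any four pairwise distinct collinear points P₀, P₁, P₂, P₃ in a real vector space V (Collinear ℝ {P₀, P₁, P₂, P₃}), it is possible to label them A, B, C, D (i.e., there is a bijection of {P₀, P₁, P₂, P₃} onto labels A, B, C, D) such that Sbtw ℝ A B C, Sbtw ℝ A B D, Sbtw ℝ A C D, and Sbtw ℝ B C D. (This is Hilbert's Theorem 5, verified in the standard real affine model.) -/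
lemma exists_sorted4 (t₀ t₁ t₂ t₃ : ℝ)
    (h01 : t₀ ≠ t₁) (h02 : t₀ ≠ t₂) (h03 : t₀ ≠ t₃)
    (h12 : t₁ ≠ t₂) (h13 : t₁ ≠ t₃) (h23 : t₂ ≠ t₃) :
    ∃ a b c d : ℝ, ({a, b, c, d} : Set ℝ) = {t₀, t₁, t₂, t₃} ∧ a < b ∧ b < c ∧ c < d := by
  set s : Finset ℝ := {t₀, t₁, t₂, t₃} with hs_def
  have hcard : s.card = 4 := by
    rw [hs_def, Finset.card_insert_of_notMem (by simp [h01, h02, h03]),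
      Finset.card_insert_of_notMem (by simp [h12, h13]),
      Finset.card_insert_of_notMem (by simp [h23]), Finset.card_singleton]
  have hlen : (s.sort (· ≤ ·)).length = 4 := by rw [Finset.length_sort, hcard]
  have hsorted := (Finset.sortedLT_sort s).pairwise
  have htf := Finset.sort_toFinset s (· ≤ ·)
  rcases e : s.sort (· ≤ ·) with _ | ⟨a, _ | ⟨b, _ | ⟨c, _ | ⟨d, _ | _⟩⟩⟩⟩ <;>
    rw [e] at hlen <;> simp only [List.length] at hlen <;> try omega
  rw [e] at hsorted htf
  simp only [List.pairwise_cons, List.mem_cons, List.not_mem_nil, or_false,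
    List.mem_singleton, forall_eq_or_imp, forall_eq, List.Pairwise.nil, and_true,
    List.pairwise_singleton] at hsorted
  refine ⟨a, b, c, d, ?_, hsorted.1.1, hsorted.2.1.1, hsorted.2.2.1⟩
  have h1 : (([a, b, c, d] : List ℝ).toFinset : Set ℝ) = (s : Set ℝ) := by rw [htf]
  rw [hs_def] at h1
  simp only [List.toFinset_cons, List.toFinset_nil, Finset.coe_insert,
    insert_empty_eq, Finset.coe_insert, Finset.coe_singleton] at h1
  convert h1 using 2

lemma sbtw_aux {V : Type*} [AddCommGroup V] [Module ℝ V] (p v : V) (hv : v ≠ 0)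
    {a b c : ℝ} (hab : a < b) (hbc : b < c) :
    Sbtw ℝ (a • v + p) (b • v + p) (c • v + p) := by
  have hca : c - a ≠ 0 := sub_ne_zero.2 (hab.trans hbc).ne'
  have h : b • v + p = AffineMap.lineMap (a • v + p) (c • v + p) ((b - a) / (c - a)) := by
    rw [AffineMap.lineMap_apply]
    simp only [vsub_eq_sub, vadd_eq_add]
    rw [show (c • v + p) - (a • v + p) = (c - a) • v by rw [sub_smul]; abel,
      smul_smul, div_mul_cancel₀ _ hca, sub_smul]
    abel
  rw [h]
  refine sbtw_lineMap_iff.2 ⟨?_, div_pos (by linarith) (by linarith),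
    (div_lt_one (by linarith)).2 (by linarith)⟩
  intro he
  apply hv
  have : (c - a) • v = 0 := by rw [sub_smul, sub_eq_zero]; exact add_right_cancel he.symm
  exact (smul_eq_zero.1 this).resolve_left hca

/-- Hilbert's Theorem 5 (in the real affine model): any four pairwise distinct
collinear points may be labelled `A`, `B`, `C`, `D` so that `B` lies between
`A` and `C` and between `A` and `D`, and `C` lies between `A` and `D` and
between `B` and `D`. -/
theorem hilbert_theorem_5 {V : Type*} [AddCommGroup V] [Module ℝ V]
    (P₀ P₁ P₂ P₃ : V)
    (h01 : P₀ ≠ P₁) (h02 : P₀ ≠ P₂) (h03 : P₀ ≠ P₃)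
    (h12 : P₁ ≠ P₂) (h13 : P₁ ≠ P₃) (h23 : P₂ ≠ P₃)
    (hcol : Collinear ℝ ({P₀, P₁, P₂, P₃} : Set V)) :
    ∃ A B C D : V, ({A, B, C, D} : Set V) = {P₀, P₁, P₂, P₃} ∧
      Sbtw ℝ A B C ∧ Sbtw ℝ A B D ∧ Sbtw ℝ A C D ∧ Sbtw ℝ B C D := by
  rw [collinear_iff_exists_forall_eq_smul_vadd] at hcol
  obtain ⟨p, v, hpv⟩ := hcol
  obtain ⟨t₀, h0⟩ := hpv P₀ (by simp)
  obtain ⟨t₁, h1⟩ := hpv P₁ (by simp)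
  obtain ⟨t₂, h2⟩ := hpv P₂ (by simp)
  obtain ⟨t₃, h3⟩ := hpv P₃ (by simp)
  simp only [vadd_eq_add] at h0 h1 h2 h3
  have hv : v ≠ 0 := by
    rintro rfl
    apply h01
    rw [h0, h1, smul_zero, smul_zero]
  have hinj : Function.Injective (fun t : ℝ => t • v + p) := fun s t hst => by
    simp only [add_left_inj] at hst
    have := sub_smul s t v ▸ sub_eq_zero.2 hst
    exact sub_eq_zero.1 ((smul_eq_zero.1 this).resolve_right hv)
  -- distinct parameters
  have ht01 : t₀ ≠ t₁ := fun h => h01 (by rw [h0, h1, h])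
  have ht02 : t₀ ≠ t₂ := fun h => h02 (by rw [h0, h2, h])
  have ht03 : t₀ ≠ t₃ := fun h => h03 (by rw [h0, h3, h])
  have ht12 : t₁ ≠ t₂ := fun h => h12 (by rw [h1, h2, h])
  have ht13 : t₁ ≠ t₃ := fun h => h13 (by rw [h1, h3, h])
  have ht23 : t₂ ≠ t₃ := fun h => h23 (by rw [h2, h3, h])
  obtain ⟨a, b, c, d, hset, hab, hbc, hcd⟩ :=
    exists_sorted4 t₀ t₁ t₂ t₃ ht01 ht02 ht03 ht12 ht13 ht23
  refine ⟨a • v + p, b • v + p, c • v + p, d • v + p, ?_,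
    sbtw_aux p v hv hab hbc, sbtw_aux p v hv hab (hbc.trans hcd),
    sbtw_aux p v hv (hab.trans hbc) hcd, sbtw_aux p v hv hbc hcd⟩
  have : ({a • v + p, b • v + p, c • v + p, d • v + p} : Set V)
      = (fun t : ℝ => t • v + p) '' {a, b, c, d} := by
    simp [Set.image_insert_eq]
  rw [this, hset, h0, h1, h2, h3]
  simp [Set.image_insert_eq]
end

section
/- Let p : Fin n → V be an injective family of collinear points in a real vector space V (Collinear ℝ (Set.range p)). Then there exists a permutation σ of Fin n such that for all indices i < j < k, the point p (σ j) lies strictly between p (σ i) and p (σ k), i.e., Sbtw ℝ (p (σ i)) (p (σ j)) (p (σ k)). (Existence half of Hilbert's Theorem 6: any finite set of points on a line can be labeled in order.) -/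
/-- Existence half of Hilbert's Theorem 6 (in the real affine model): any injective
finite family of collinear points can be relabelled by a permutation so that the
labels occur in betweenness order. -/
theorem hilbert_theorem_6_exists {V : Type*} [AddCommGroup V] [Module ℝ V]
    {n : ℕ} (p : Fin n → V) (hp : Function.Injective p)
    (hcol : Collinear ℝ (Set.range p)) :
    ∃ σ : Equiv.Perm (Fin n), ∀ i j k : Fin n, i < j → j < k →
      Sbtw ℝ (p (σ i)) (p (σ j)) (p (σ k)) := by
  obtain ⟨p₀, v, hv⟩ := (collinear_iff_exists_forall_eq_smul_vadd _).1 hcol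
  choose f hf using fun i => hv (p i) (Set.mem_range_self i)
  have hfinj : Function.Injective f := by
    intro i j h
    apply hp
    rw [hf i, hf j, h]
  refine ⟨Tuple.sort f, fun i j k hij hjk => ?_⟩
  have hmono : StrictMono (f ∘ Tuple.sort f) :=
    (Tuple.monotone_sort f).strictMono_of_injective
      (hfinj.comp (Tuple.sort f).injective)
  set a := f (Tuple.sort f i) with ha
  set b := f (Tuple.sort f j) with hb
  set c := f (Tuple.sort f k) with hc
  have hab : a < b := hmono hij
  have hbc : b < c := hmono hjk
  have hac : a < c := hab.trans hbc
  have hxy : p (Tuple.sort f i) ≠ p (Tuple.sort f k) :=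
    fun h => hac.ne (congrArg f (hp h))
  have hr : (b - a) / (c - a) ∈ Set.Ioo (0 : ℝ) 1 := by
    constructor
    · exact div_pos (by linarith) (by linarith)
    · rw [div_lt_one (by linarith)]; linarith
  have hlm : AffineMap.lineMap (p (Tuple.sort f i)) (p (Tuple.sort f k))
      ((b - a) / (c - a)) = p (Tuple.sort f j) := by
    rw [hf (Tuple.sort f i), hf (Tuple.sort f j), hf (Tuple.sort f k)]
    simp only [AffineMap.lineMap_apply, ← ha, ← hb, ← hc, vadd_eq_add, vsub_eq_sub]
    have : c • v + p₀ - (a • v + p₀) = (c - a) • v := by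
      rw [sub_smul]; abel
    rw [this, smul_smul, div_mul_cancel₀ _ (by linarith : c - a ≠ 0), sub_smul]
    abel
  rw [← hlm]
  exact sbtw_lineMap_iff.2 ⟨hxy, hr⟩
end

section
/- Let p : Fin n → V be an injective family of collinear points in a real vector space V, and suppose σ and τ are both permutations of Fin n such that for all i < j < k one has Sbtw ℝ (p (σ i)) (p (σ j)) (p (σ k)) and Sbtw ℝ (p (τ i)) (p (τ j)) (p (τ k)). Then either τ = σ or τ i = σ (Fin.rev i) for all i, i.e., τ is the reversal of σ. (Uniqueness half of Hilbert's Theorem 6: besides a given ordering, only the reverse ordering has the betweenness property.) -/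
/-- A strictly monotone permutation of `Fin n` is the identity. -/
lemma strictMono_perm_apply {n : ℕ} (f : Equiv.Perm (Fin n)) (h : StrictMono f) :
    ∀ i, f i = i := by
  intro i
  have he : StrictMono.orderIsoOfSurjective (f : Fin n → Fin n) h f.surjective =
      OrderIso.refl (Fin n) := Subsingleton.elim _ _
  calc f i = StrictMono.orderIsoOfSurjective (f : Fin n → Fin n) h f.surjective i :=
      (congrFun (StrictMono.coe_orderIsoOfSurjective (f : Fin n → Fin n) h f.surjective) i).symm
    _ = i := by rw [he]; rfl

/-- A permutation of `Fin n` preserving strict betweenness of indices is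
the identity or the reversal. -/
lemma perm_betweenness_rigid {n : ℕ} (f : Equiv.Perm (Fin n))
    (h : ∀ i j k : Fin n, i < j → j < k →
      (f i < f j ∧ f j < f k) ∨ (f k < f j ∧ f j < f i)) :
    (∀ i, f i = i) ∨ ∀ i, f i = Fin.rev i := by
  -- first: f is strictly monotone or strictly antitone
  have key : ∀ (g : Equiv.Perm (Fin n)),
      (∀ i j k : Fin n, i < j → j < k →
        (g i < g j ∧ g j < g k) ∨ (g k < g j ∧ g j < g i)) →
      (∀ hn : 2 ≤ n, g ⟨0, by omega⟩ < g ⟨1, by omega⟩) → StrictMono g := by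
    intro g hg hs i j hij
    rcases Nat.lt_or_ge n 2 with hn | hn
    · exfalso
      have h1 := i.2; have h2 := j.2
      have := (Fin.lt_def.mp hij); omega
    · set z0 : Fin n := ⟨0, by omega⟩ with hz0
      set z1 : Fin n := ⟨1, by omega⟩ with hz1
      have h01 : z0 < z1 := by simp [hz0, hz1, Fin.lt_def]
      have hs' : g z0 < g z1 := hs hn
      -- g z0 < g m for any z0 < m
      have hlt : ∀ m : Fin n, z0 < m → g z0 < g m := by
        intro m hm
        rcases eq_or_lt_of_le (show z1 ≤ m by
          rw [Fin.le_def]; have := Fin.lt_def.mp hm; simp [hz1]; omega) with he | hlt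
        · rw [← he]; exact hs'
        · rcases hg z0 z1 m h01 hlt with ⟨ha, hb⟩ | ⟨ha, hb⟩
          · exact ha.trans hb
          · exact absurd hs' hb.asymm
      by_cases hi : i = z0
      · exact hi ▸ hlt j (hi ▸ hij)
      · have h0i : z0 < i := by
          rw [Fin.lt_def]
          have : i.val ≠ 0 := fun h => hi (Fin.ext h)
          simp [hz0]; omega
        rcases hg z0 i j h0i hij with ⟨ha, hb⟩ | ⟨ha, hb⟩
        · exact hb
        · exact absurd (hlt i h0i) hb.asymm
  rcases Nat.lt_or_ge n 2 with hn | hn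
  · left
    intro i
    have := i.2
    have hmono : StrictMono f := key f h (fun h2 => by omega)
    exact strictMono_perm_apply f hmono i
  · set z0 : Fin n := ⟨0, by omega⟩ with hz0
    set z1 : Fin n := ⟨1, by omega⟩ with hz1
    have h01 : z0 < z1 := by simp [hz0, hz1, Fin.lt_def]
    rcases lt_or_gt_of_ne (fun he : f z0 = f z1 => (ne_of_lt h01) (f.injective he)) with
      hc | hc
    · left
      exact strictMono_perm_apply f (key f h (fun _ => hc))
    · right
      set g : Equiv.Perm (Fin n) := f.trans Fin.revPerm with hgdef
      have hgap : ∀ i, g i = Fin.rev (f i) := fun i => rfl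
      have hrevlt : ∀ a b : Fin n, a < b → Fin.rev b < Fin.rev a := by
        intro a b hab
        exact Fin.rev_lt_rev.mpr hab
      have hg : ∀ i j k : Fin n, i < j → j < k →
          (g i < g j ∧ g j < g k) ∨ (g k < g j ∧ g j < g i) := by
        intro i j k hij hjk
        rcases h i j k hij hjk with ⟨ha, hb⟩ | ⟨ha, hb⟩
        · right
          exact ⟨by rw [hgap, hgap]; exact hrevlt _ _ hb,
                 by rw [hgap, hgap]; exact hrevlt _ _ ha⟩
        · left
          exact ⟨by rw [hgap, hgap]; exact hrevlt _ _ hb,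
                 by rw [hgap, hgap]; exact hrevlt _ _ ha⟩
      have hgs : g z0 < g z1 := by
        rw [hgap, hgap]; exact hrevlt _ _ hc
      have hmono : StrictMono g := key g hg (fun _ => hgs)
      intro i
      have h2 := strictMono_perm_apply g hmono i
      rw [hgap] at h2
      have h3 := congrArg Fin.rev h2
      rw [Fin.rev_rev] at h3
      exact h3

/-- Uniqueness half of Hilbert's Theorem 6 (in the real affine model): besides a given
ordering of an injective collinear family, only the reverse ordering has the
betweenness property. -/
theorem hilbert_theorem_6_unique {V : Type*} [AddCommGroup V] [Module ℝ V]
    {n : ℕ} (p : Fin n → V) (hp : Function.Injective p)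
    (hcol : Collinear ℝ (Set.range p))
    (σ τ : Equiv.Perm (Fin n))
    (hσ : ∀ i j k : Fin n, i < j → j < k → Sbtw ℝ (p (σ i)) (p (σ j)) (p (σ k)))
    (hτ : ∀ i j k : Fin n, i < j → j < k → Sbtw ℝ (p (τ i)) (p (τ j)) (p (τ k))) :
    τ = σ ∨ ∀ i : Fin n, τ i = σ (Fin.rev i) := by
  -- key: Sbtw (p (σ a)) (p (σ b)) (p (σ c)) forces a < b < c or c < b < a
  have keyA : ∀ a b c : Fin n, Sbtw ℝ (p (σ a)) (p (σ b)) (p (σ c)) →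
      (a < b ∧ b < c) ∨ (c < b ∧ b < a) := by
    intro a b c h
    have hab : a ≠ b := fun e => h.left_ne (congrArg p (congrArg σ e))
    have hbc : b ≠ c := fun e => h.ne_right (congrArg p (congrArg σ e))
    have hac : a ≠ c := fun e => h.left_ne_right (congrArg p (congrArg σ e))
    rcases hab.lt_or_gt with hab' | hab' <;> rcases hbc.lt_or_gt with hbc' | hbc'
    · exact Or.inl ⟨hab', hbc'⟩
    · rcases hac.lt_or_gt with hac' | hac'
      · exact absurd (hσ a c b hac' hbc').wbtw h.not_swap_right
      · exact absurd (hσ c a b hac' hab').wbtw h.not_rotate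
    · rcases hac.lt_or_gt with hac' | hac'
      · exact absurd (hσ b a c hab' hac').wbtw h.not_swap_left
      · exact absurd (hσ b c a hbc' hac').wbtw.symm h.not_swap_right
    · exact Or.inr ⟨hbc', hab'⟩
  set f : Equiv.Perm (Fin n) := τ.trans σ.symm with hfdef
  have hfa : ∀ i, σ (f i) = τ i := fun i => σ.apply_symm_apply (τ i)
  have hf : ∀ i j k : Fin n, i < j → j < k →
      (f i < f j ∧ f j < f k) ∨ (f k < f j ∧ f j < f i) := by
    intro i j k hij hjk
    apply keyA
    rw [hfa, hfa, hfa]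
    exact hτ i j k hij hjk
  rcases perm_betweenness_rigid f hf with hid | hrev
  · left
    refine Equiv.ext fun i => ?_
    have := hfa i
    rw [hid i] at this
    exact this.symm
  · right
    intro i
    have := hfa i
    rw [hrev i] at this
    exact this.symm
end

section
/- Pasch's axiom holds in the real affine model: let A, B, C be three non-collinear points in a real vector space V (¬ Collinear ℝ {A, B, C}), and let L be a line (an affine subspace of V whose direction has rank 1) contained in the affine span of {A, B, C}, with A ∉ L, B ∉ L, C ∉ L. If there exists a point X ∈ L with Sbtw ℝ A X B, then there exists a point Y ∈ L with Sbtw ℝ A Y C or Sbtw ℝ B Y C. -/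
open AffineMap Set

/-- Pasch's axiom (Hilbert's Axiom II,4) holds in the real affine model: if a line `L`
lying in the plane of a triangle `A B C`, and avoiding its vertices, meets the segment
`AB` in an interior point, then it meets the interior of segment `AC` or of segment
`BC`. -/
theorem pasch_axiom {V : Type*} [AddCommGroup V] [Module ℝ V]
    (A B C : V) (hncol : ¬ Collinear ℝ ({A, B, C} : Set V))
    (L : AffineSubspace ℝ V) (hrank : Module.rank ℝ L.direction = 1)
    (hLplane : L ≤ affineSpan ℝ ({A, B, C} : Set V))
    (hA : A ∉ L) (hB : B ∉ L) (hC : C ∉ L)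
    (hX : ∃ X ∈ L, Sbtw ℝ A X B) :
    ∃ Y ∈ L, Sbtw ℝ A Y C ∨ Sbtw ℝ B Y C := by
  obtain ⟨X, hXL, hAXB⟩ := hX
  have hAC : A ≠ C := by
    rintro rfl
    apply hncol
    have h : ({A, B, A} : Set V) = {A, B} := by
      ext x; simp only [Set.mem_insert_iff, Set.mem_singleton_iff]; tauto
    rw [h]; exact collinear_pair ℝ A B
  have hBC : B ≠ C := by
    rintro rfl
    apply hncol
    have h : ({A, B, B} : Set V) = {A, B} := by
      ext x; simp only [Set.mem_insert_iff, Set.mem_singleton_iff]; tauto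
    rw [h]; exact collinear_pair ℝ A B
  obtain ⟨⟨u, hu, rfl⟩, -⟩ := sbtw_iff_mem_image_Ioo_and_ne.1 hAXB
  -- pick a nonzero direction vector of L
  have hnt : Nontrivial L.direction := by
    rw [← rank_pos_iff_nontrivial (R := ℝ)]
    rw [hrank]; exact one_pos
  obtain ⟨d, hdne⟩ := exists_ne (0 : L.direction)
  have hd0mem : (d : V) ∈ L.direction := d.2
  have hd0ne : (d : V) ≠ 0 := by
    simpa [Submodule.coe_eq_zero] using hdne
  -- d lies in the span of B - A and C - A
  have hle : L.direction ≤ vectorSpan ℝ ({A, B, C} : Set V) := by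
    have := AffineSubspace.direction_le hLplane
    rwa [direction_affineSpan] at this
  have hvs : vectorSpan ℝ ({A, B, C} : Set V) ≤ Submodule.span ℝ {B - A, C - A} := by
    rw [vectorSpan_def, Submodule.span_le]
    rintro x ⟨p, hp, q, hq, rfl⟩
    simp only [Set.mem_insert_iff, Set.mem_singleton_iff] at hp hq
    simp only [vsub_eq_sub, SetLike.mem_coe, Submodule.mem_span_pair]
    rcases hp with rfl | rfl | rfl <;> rcases hq with rfl | rfl | rfl <;>
      first
        | exact ⟨0, 0, by module⟩
        | exact ⟨1, 0, by module⟩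
        | exact ⟨-1, 0, by module⟩
        | exact ⟨0, 1, by module⟩
        | exact ⟨0, -1, by module⟩
        | exact ⟨1, -1, by module⟩
        | exact ⟨-1, 1, by module⟩
  obtain ⟨α, β, hd⟩ := Submodule.mem_span_pair.1 (hvs (hle hd0mem))
  have key0 : ∀ r : ℝ, r • (d : V) +ᵥ (lineMap A B u : V)
      = (u + r * α) • (B - A) + (r * β) • (C - A) + A := by
    intro r
    rw [← hd, AffineMap.lineMap_apply_module, vadd_eq_add]
    module
  have hβ : β ≠ 0 := by
    rintro rfl
    have hα : α ≠ 0 := by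
      rintro rfl
      simp only [zero_smul, add_zero, zero_add] at hd
      exact hd0ne hd.symm
    apply hA
    have hmem : (-(u / α)) • (d : V) +ᵥ (lineMap A B u : V) ∈ L :=
      AffineSubspace.vadd_mem_of_mem_direction (L.direction.smul_mem _ hd0mem) hXL
    have heq : (-(u / α)) • (d : V) +ᵥ (lineMap A B u : V) = A := by
      rw [key0]
      have h1 : u + -(u / α) * α = 0 := by field_simp; ring
      rw [h1]
      simp
    rwa [heq] at hmem
  set g : ℝ := α / β with hg
  set e : V := β⁻¹ • (d : V) with he
  have hemem : e ∈ L.direction := L.direction.smul_mem _ hd0mem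
  have key : ∀ r : ℝ, r • e +ᵥ (lineMap A B u : V)
      = (u + r * g) • (B - A) + r • (C - A) + A := by
    intro r
    rw [he, smul_smul, key0]
    have h1 : r * β⁻¹ * α = r * g := by rw [hg]; field_simp
    have h2 : r * β⁻¹ * β = r := by field_simp
    rw [h1, h2]
  rcases lt_trichotomy (g + u) 0 with hcase | hcase | hcase
  · -- crossing on AC
    have hgneg : g < 0 := by linarith [hu.1]
    set t : ℝ := u / (-g) with ht
    refine ⟨lineMap A C t, ?_, Or.inl ?_⟩
    · have heq : (lineMap A C t : V) = t • e +ᵥ (lineMap A B u : V) := by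
        rw [key, AffineMap.lineMap_apply_module]
        have h1 : u + t * g = 0 := by
          rw [ht]; field_simp [ne_of_lt hgneg]; ring
        rw [h1]
        module
      rw [heq]
      exact AffineSubspace.vadd_mem_of_mem_direction (L.direction.smul_mem _ hemem) hXL
    · refine sbtw_lineMap_iff.2 ⟨hAC, ?_, ?_⟩
      · exact div_pos hu.1 (by linarith)
      · rw [div_lt_one (by linarith)]
        linarith
  · -- impossible: C would lie on L
    exfalso
    apply hC
    have heq : C = (1 : ℝ) • e +ᵥ (lineMap A B u : V) := by
      rw [key]
      have h1 : u + 1 * g = 0 := by linarith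
      rw [h1]
      module
    rw [heq]
    exact AffineSubspace.vadd_mem_of_mem_direction (L.direction.smul_mem _ hemem) hXL
  · -- crossing on BC
    have hg1 : (0 : ℝ) < g + 1 := by linarith [hu.2]
    have hg1ne : g + 1 ≠ 0 := ne_of_gt hg1
    set t : ℝ := (1 - u) / (g + 1) with ht
    refine ⟨lineMap B C t, ?_, Or.inr ?_⟩
    · have heq : (lineMap B C t : V) = t • e +ᵥ (lineMap A B u : V) := by
        rw [key, AffineMap.lineMap_apply_module]
        have h1 : u + t * g = 1 - t := by
          rw [ht]; field_simp [hg1ne]; ring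
        rw [h1]
        module
      rw [heq]
      exact AffineSubspace.vadd_mem_of_mem_direction (L.direction.smul_mem _ hemem) hXL
    · refine sbtw_lineMap_iff.2 ⟨hBC, ?_, ?_⟩
      · exact div_pos (by linarith [hu.2]) hg1
      · rw [div_lt_one hg1]
        linarith
end

section
/- Let A, C, O be non-collinear points in a real vector space V (¬ Collinear ℝ {A, C, O}), let B satisfy Sbtw ℝ A B C, and let D' satisfy Sbtw ℝ C O D'. Then there exists a point S with Sbtw ℝ A S O and Collinear ℝ {B, D', S}. (The key step in the successor construction: applying Pasch's axiom to triangle ACO and the line BD' locates a point S strictly between A and O.) -/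
/-- Key step of the successor construction: applying Pasch's axiom to triangle `A C O`
and the line through `B` and `D'`, we locate a point `S` strictly between `A` and `O`
lying on the line `B D'`. -/
theorem successor_key_step {V : Type*} [AddCommGroup V] [Module ℝ V]
    (A C O B D' : V) (hncol : ¬ Collinear ℝ ({A, C, O} : Set V))
    (hB : Sbtw ℝ A B C) (hD' : Sbtw ℝ C O D') :
    ∃ S : V, Sbtw ℝ A S O ∧ Collinear ℝ ({B, D', S} : Set V) := by
  obtain ⟨t, ht, hBt⟩ := hB.mem_image_Ioo
  obtain ⟨s, hs, hOs⟩ := hD'.mem_image_Ioo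
  have hAO : A ≠ O := by
    rintro rfl
    exact hncol (by
      have : ({A, C, A} : Set V) = {A, C} := by
        ext x; simp [or_comm, or_assoc]
      rw [this]; exact collinear_pair ℝ A C)
  have hden : t * s + 1 - s > 0 := by nlinarith [ht.1, ht.2, hs.1, hs.2]
  set u : ℝ := t * s / (t * s + 1 - s) with hu
  set lam : ℝ := t / (t * s + 1 - s) with hlam
  refine ⟨AffineMap.lineMap A O lam, ?_, ?_⟩
  · rw [sbtw_lineMap_iff]
    refine ⟨hAO, ?_, ?_⟩
    · exact div_pos ht.1 hden
    · rw [div_lt_one hden]; nlinarith [ht.2, hs.2]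
  · have hS : AffineMap.lineMap A O lam = AffineMap.lineMap B D' u := by
      simp only [AffineMap.lineMap_apply_module] at hBt hOs ⊢
      rw [← hBt, ← hOs]
      have hs0 : s ≠ 0 := ne_of_gt hs.1
      have hd0 : t * s + 1 - s ≠ 0 := ne_of_gt hden
      rw [hu, hlam]
      match_scalars <;> field_simp <;> ring
    have : AffineMap.lineMap A O lam ∈ line[ℝ, B, D'] := by
      rw [hS]; exact AffineMap.lineMap_mem_affineSpan_pair _ _ _
    have hc := collinear_insert_of_mem_affineSpan_pair this
    have hset : ({B, D', AffineMap.lineMap A O lam} : Set V)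
        = {AffineMap.lineMap A O lam, B, D'} := by
      ext x; simp; tauto
    rw [hset]
    exact hc
end

section
/- Let A, O, D be non-collinear points in a real vector space V (¬ Collinear ℝ {A, O, D}), let N satisfy Sbtw ℝ A N O, and let C satisfy Sbtw ℝ C O D. Then there exists a point D' with Sbtw ℝ A D' D and Collinear ℝ {C, N, D'}. (The second step in the successor construction: applying Pasch's axiom to triangle AOD and the line through C and N places the point D' strictly between A and D.) -/
/-- Second step of the successor construction: applying Pasch's axiom to triangle
`A O D` and the line through `C` and `N`, we place a point `D'` strictly between
`A` and `D` lying on the line `C N`. -/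
theorem successor_second_step {V : Type*} [AddCommGroup V] [Module ℝ V]
    (A O D N C : V) (hncol : ¬ Collinear ℝ ({A, O, D} : Set V))
    (hN : Sbtw ℝ A N O) (hC : Sbtw ℝ C O D) :
    ∃ D' : V, Sbtw ℝ A D' D ∧ Collinear ℝ ({C, N, D'} : Set V) := by
  obtain ⟨t, ht, hNt⟩ := hN.mem_image_Ioo
  obtain ⟨s, hs, hOs⟩ := hC.mem_image_Ioo
  have hAD : A ≠ D := by
    rintro rfl
    exact hncol (by simp [Set.insert_comm, collinear_pair])
  set μ : ℝ := t * s / (1 - t * (1 - s)) with hμ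
  have hden : 0 < 1 - t * (1 - s) := by nlinarith [ht.1, ht.2, hs.1, hs.2]
  refine ⟨AffineMap.lineMap A D μ, sbtw_lineMap_iff.2 ⟨hAD, ?_, ?_⟩, ?_⟩
  · exact div_pos (by nlinarith [ht.1, hs.1]) hden
  · rw [div_lt_one hden]; nlinarith [ht.2, hs.1]
  · have hs1 : (1 - s : ℝ) ≠ 0 := by nlinarith [hs.2]
    have hCeq : C = (1 - s)⁻¹ • (O - s • D) := by
      have : s • (D - C) + C = O := by
        simpa [AffineMap.lineMap_apply_module'] using hOs
      rw [← this]
      match_scalars <;> field_simp <;> ring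
    have hD' : AffineMap.lineMap A D μ =
        AffineMap.lineMap N C (-(t * (1 - s)) / (1 - t * (1 - s))) := by
      subst hCeq
      rw [← hNt]
      simp only [AffineMap.lineMap_apply_module', hμ]
      match_scalars <;> field_simp <;> ring
    have hmem : AffineMap.lineMap A D μ ∈ line[ℝ, N, C] := by
      rw [hD']; exact AffineMap.lineMap_mem_affineSpan_pair _ _ _
    have hcol := collinear_insert_of_mem_affineSpan_pair hmem
    have hset : ({C, N, AffineMap.lineMap A D μ} : Set V) =
        {AffineMap.lineMap A D μ, N, C} := by
      ext x; simp; tauto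
    rw [hset]; exact hcol
end

section
/- Existence and closure of the geometric successor: let A, B, C, D, O, N be points in a real vector space V forming a 'diagram', i.e., ¬ Collinear ℝ {A, B, O}, Sbtw ℝ A B C, Sbtw ℝ C O D, and (Sbtw ℝ A N O ∨ N = O). Then there exist points S and D' such that Collinear ℝ {C, D', N}, Collinear ℝ {B, D', S}, Collinear ℝ {A, D, D'}, Sbtw ℝ A S O, and Sbtw ℝ A S N (where for N = O the last condition coincides with Sbtw ℝ A S O). In particular the points A, B, C, D, O, S again form a diagram. -/
set_option maxHeartbeats 1000000

private lemma col3 {V : Type*} [AddCommGroup V] [Module ℝ V] {x y z : V} {a : ℝ}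
    (h : y - x = a • (z - x)) : Collinear ℝ ({x, y, z} : Set V) := by
  rw [collinear_iff_of_mem (Set.mem_insert x _)]
  refine ⟨z - x, ?_⟩
  rintro p (rfl | rfl | rfl)
  · exact ⟨0, by simp⟩
  · exact ⟨a, by rw [← h]; simp⟩
  · exact ⟨1, by simp⟩

/-- Existence and closure of the geometric successor: given a diagram
`A B C D O N` (with `¬ Collinear ℝ {A, B, O}`, `Sbtw ℝ A B C`, `Sbtw ℝ C O D`,
and `Sbtw ℝ A N O ∨ N = O`), there exist points `S` and `D'` witnessing the
successor construction; in particular `A B C D O S` is again a diagram. -/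
theorem successor_exists {V : Type*} [AddCommGroup V] [Module ℝ V]
    (A B C D O N : V)
    (hncol : ¬ Collinear ℝ ({A, B, O} : Set V))
    (hB : Sbtw ℝ A B C) (hO : Sbtw ℝ C O D)
    (hN : Sbtw ℝ A N O ∨ N = O) :
    ∃ S D' : V,
      Collinear ℝ ({C, D', N} : Set V) ∧
      Collinear ℝ ({B, D', S} : Set V) ∧
      Collinear ℝ ({A, D, D'} : Set V) ∧
      Sbtw ℝ A S O ∧ Sbtw ℝ A S N := by
  -- basic non-degeneracy
  have hAO : A ≠ O := by
    rintro rfl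
    exact hncol ((collinear_pair ℝ A B).subset (by intro p hp; simp at hp ⊢; tauto))
  -- extract parameters
  obtain ⟨b, hbmem, hBeq⟩ := hB.mem_image_Ioo
  obtain ⟨o, homem, hOeq⟩ := hO.mem_image_Ioo
  obtain ⟨hb0, hb1⟩ := hbmem
  obtain ⟨ho0, ho1⟩ := homem
  -- N - A = ν • (O - A) with ν ∈ (0, 1]
  obtain ⟨ν, hν0, hν1, hNeq⟩ :
      ∃ ν : ℝ, 0 < ν ∧ ν ≤ 1 ∧ N - A = ν • (O - A) := by
    rcases hN with h | rfl
    · obtain ⟨ν, ⟨hν0, hν1⟩, hNe⟩ := h.mem_image_Ioo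
      refine ⟨ν, hν0, le_of_lt hν1, ?_⟩
      rw [← hNe]; rw [AffineMap.lineMap_apply_module']; abel
    · exact ⟨1, one_pos, le_refl 1, by rw [one_smul]⟩
  -- vector relations
  set u : V := B - A with hu
  set w : V := O - A with hw
  have hC : C - A = b⁻¹ • u := by
    have : u = b • (C - A) := by
      rw [hu, ← hBeq, AffineMap.lineMap_apply_module']; abel
    rw [this, smul_smul, inv_mul_cancel₀ (ne_of_gt hb0), one_smul]
  have hD : D - C = o⁻¹ • (w + A - C) := by
    have : w + A - C = o • (D - C) := by
      rw [hw, ← hOeq, AffineMap.lineMap_apply_module']; abel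
    rw [this, smul_smul, inv_mul_cancel₀ (ne_of_gt ho0), one_smul]
  -- scalar bookkeeping
  set E : ℝ := ν * o + 1 - ν with hE
  have hE0 : 0 < E := by nlinarith
  set Δ : ℝ := b * E + ν * (1 - o) with hΔ
  have hΔ0 : 0 < Δ := by nlinarith
  set σ : ℝ := ν * b / Δ with hσ
  have hσ0 : 0 < σ := by positivity
  have h1 : (0:ℝ) < ν * (1 - o) * (1 - b) := mul_pos (mul_pos hν0 (by linarith)) (by linarith)
  have hbΔ : b < Δ := by rw [hΔ, hE]; nlinarith [h1]
  have hσν : σ < ν := by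
    rw [hσ, div_lt_iff₀ hΔ0]
    exact (mul_lt_mul_iff_right₀ hν0).mpr hbΔ
  have hσ1 : σ < 1 := lt_of_lt_of_le hσν hν1
  have hbne : b ≠ 0 := ne_of_gt hb0
  have hone : o ≠ 0 := ne_of_gt ho0
  have hνne : ν ≠ 0 := ne_of_gt hν0
  have hEne : ν * o + 1 - ν ≠ 0 := by nlinarith
  have hΔne : b * (ν * o + 1 - ν) + ν * (1 - o) ≠ 0 := by nlinarith
  -- the two witness points
  refine ⟨A + σ • w, A + (-(ν * (1 - o)) / (b * E)) • u + (ν / E) • w, ?_, ?_, ?_, ?_, ?_⟩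
  · -- Collinear {C, D', N}
    apply col3 (a := E⁻¹)
    have hNC : N - C = ν • w - b⁻¹ • u := by
      have : N - C = (N - A) - (C - A) := by abel
      rw [this, hNeq, hC, hw]
    rw [hNC]
    have hDC : (A + (-(ν * (1 - o)) / (b * E)) • u + (ν / E) • w) - C
        = (-(ν * (1 - o)) / (b * E)) • u + (ν / E) • w - b⁻¹ • u := by
      have : (A + (-(ν * (1 - o)) / (b * E)) • u + (ν / E) • w) - C
          = (-(ν * (1 - o)) / (b * E)) • u + (ν / E) • w - (C - A) := by abel
      rw [this, hC]
    rw [hDC]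
    match_scalars
    all_goals simp only [hσ, hΔ, hE]
    all_goals field_simp
    all_goals ring
  · -- Collinear {B, D', S}
    apply col3 (a := Δ / (b * E))
    have h1 : (A + (-(ν * (1 - o)) / (b * E)) • u + (ν / E) • w) - B
        = (-(ν * (1 - o)) / (b * E) - 1) • u + (ν / E) • w := by
      have : (A + (-(ν * (1 - o)) / (b * E)) • u + (ν / E) • w) - B
          = (-(ν * (1 - o)) / (b * E)) • u + (ν / E) • w - (B - A) := by abel
      rw [this, ← hu, sub_smul, one_smul]; abel
    have h2 : (A + σ • w) - B = σ • w - u := by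
      have : (A + σ • w) - B = σ • w - (B - A) := by abel
      rw [this, ← hu]
    rw [h1, h2]
    match_scalars
    all_goals simp only [hσ, hΔ, hE]
    all_goals field_simp
    · ring
    · ring
    · rw [eq_div_iff (by intro h; apply hΔne; linear_combination h)]; ring
  · -- Collinear {A, D, D'}
    apply col3 (a := E / (o * ν))
    have hDA : D - A = (b⁻¹ - o⁻¹ * b⁻¹) • u + o⁻¹ • w := by
      have : D - A = (D - C) + (C - A) := by abel
      rw [this, hD, hC]
      have : w + A - C = w - (C - A) := by abel
      rw [this, hC, smul_sub, smul_smul]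
      module
    have hD'A : (A + (-(ν * (1 - o)) / (b * E)) • u + (ν / E) • w) - A
        = (-(ν * (1 - o)) / (b * E)) • u + (ν / E) • w := by abel
    rw [hDA, hD'A]
    match_scalars
    all_goals simp only [hσ, hΔ, hE]
    all_goals field_simp
    · rw [mul_comm o ν, mul_div_cancel_left₀ _ hEne]; ring
    · rw [mul_comm o ν, mul_div_cancel_left₀ _ hEne]; ring
    · rw [mul_comm o ν, div_self hEne]
  · -- Sbtw A S O
    have : A + σ • w = AffineMap.lineMap A O σ := by
      rw [AffineMap.lineMap_apply_module', hw]; abel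
    rw [this]
    exact sbtw_lineMap_iff.2 ⟨hAO, hσ0, hσ1⟩
  · -- Sbtw A S N
    have hAN : A ≠ N := by
      intro h
      have : (0 : V) = ν • (O - A) := by rw [← hNeq, ← h]; abel
      have hOA : O - A ≠ 0 := fun hc => hAO (by
        have := sub_eq_zero.mp hc; exact this.symm)
      exact hOA (by
        have := this.symm
        rcases smul_eq_zero.mp this with h | h
        · exact absurd h (ne_of_gt hν0)
        · exact h)
    have hkey : A + σ • w = AffineMap.lineMap A N (b / Δ) := by
      rw [AffineMap.lineMap_apply_module']
      have : N - A = ν • w := by rw [hNeq, hw]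
      rw [this, smul_smul, hσ]
      have : b / Δ * ν = ν * b / Δ := by ring
      rw [this]
      abel
    rw [hkey]
    refine sbtw_lineMap_iff.2 ⟨hAN, ?_, ?_⟩
    · positivity
    · rw [div_lt_one hΔ0]; exact hbΔ
end

section
/- Uniqueness of the geometric successor: let A, B, C, D, O, N be points in a real vector space V forming a diagram, i.e., ¬ Collinear ℝ {A, B, O}, Sbtw ℝ A B C, Sbtw ℝ C O D, and (Sbtw ℝ A N O ∨ N = O). Suppose S₁, D₁' and S₂, D₂' both satisfy: Collinear ℝ {C, Dᵢ', N}, Collinear ℝ {B, Dᵢ', Sᵢ}, Collinear ℝ {A, D, Dᵢ'}, Sbtw ℝ A Sᵢ O, and Sbtw ℝ A Sᵢ N (for i = 1, 2). Then S₁ = S₂. -/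
set_option maxHeartbeats 1000000

/-- All points collinear with a fixed pair of distinct points are collinear. -/
lemma coll_key {V : Type*} [AddCommGroup V] [Module ℝ V] {a b c d e : V}
    (hab : a ≠ b) (h1 : Collinear ℝ ({a, b, c} : Set V))
    (h2 : Collinear ℝ ({a, b, d} : Set V))
    (h3 : Collinear ℝ ({a, b, e} : Set V)) :
    Collinear ℝ ({c, d, e} : Set V) := by
  have hc : c ∈ line[ℝ, a, b] :=
    h1.mem_affineSpan_of_mem_of_ne (by simp) (by simp) (by simp) hab
  have hd : d ∈ line[ℝ, a, b] :=
    h2.mem_affineSpan_of_mem_of_ne (by simp) (by simp) (by simp) hab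
  have he : e ∈ line[ℝ, a, b] :=
    h3.mem_affineSpan_of_mem_of_ne (by simp) (by simp) (by simp) hab
  have := collinear_insert_insert_insert_of_mem_affineSpan_pair hc hd he
  exact this.subset (by intro x hx; simp at hx ⊢; tauto)

/-- Uniqueness of the geometric successor: any two points `S₁`, `S₂` witnessing the
successor construction for the same diagram `A B C D O N` coincide. -/
theorem successor_unique {V : Type*} [AddCommGroup V] [Module ℝ V]
    (A B C D O N : V)
    (hncol : ¬ Collinear ℝ ({A, B, O} : Set V))
    (hB : Sbtw ℝ A B C) (hO : Sbtw ℝ C O D)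
    (hN : Sbtw ℝ A N O ∨ N = O)
    (S₁ S₂ D₁' D₂' : V)
    (h₁col₁ : Collinear ℝ ({C, D₁', N} : Set V))
    (h₁col₂ : Collinear ℝ ({B, D₁', S₁} : Set V))
    (h₁col₃ : Collinear ℝ ({A, D, D₁'} : Set V))
    (h₁btw₁ : Sbtw ℝ A S₁ O) (h₁btw₂ : Sbtw ℝ A S₁ N)
    (h₂col₁ : Collinear ℝ ({C, D₂', N} : Set V))
    (h₂col₂ : Collinear ℝ ({B, D₂', S₂} : Set V))
    (h₂col₃ : Collinear ℝ ({A, D, D₂'} : Set V))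
    (h₂btw₁ : Sbtw ℝ A S₂ O) (h₂btw₂ : Sbtw ℝ A S₂ N) :
    S₁ = S₂ := by
  -- shorthand for permuting collinear triples
  have perm : ∀ {s t : Set V}, Collinear ℝ s → t ⊆ s → Collinear ℝ t :=
    fun h ht => Collinear.subset ht h
  have cABC : Collinear ℝ ({A, B, C} : Set V) := hB.wbtw.collinear
  have cCOD : Collinear ℝ ({C, O, D} : Set V) := hO.wbtw.collinear
  have hAB : A ≠ B := hB.left_ne
  have hAC : A ≠ C := hB.left_ne_right
  have hCD : C ≠ D := hO.left_ne_right
  have hAO : A ≠ O := h₁btw₁.left_ne_right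
  have trivAC : Collinear ℝ ({A, C, A} : Set V) :=
    perm (collinear_pair ℝ A C) (by intro x hx; simp at hx ⊢; tauto)
  have cACB : Collinear ℝ ({A, C, B} : Set V) :=
    perm cABC (by intro x hx; simp at hx ⊢; tauto)
  -- A ≠ D
  have hAD : A ≠ D := by
    intro h
    subst h
    have cACO : Collinear ℝ ({A, C, O} : Set V) :=
      perm cCOD (by intro x hx; simp at hx ⊢; tauto)
    exact hncol (coll_key hAC trivAC cACB cACO)
  -- C ≠ N
  have hCN : C ≠ N := by
    intro h
    subst h
    rcases hN with hN | hN
    · have cACO : Collinear ℝ ({A, C, O} : Set V) := hN.wbtw.collinear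
      exact hncol (coll_key hAC trivAC cACB cACO)
    · exact hO.ne_left hN.symm
  -- B ≠ Dᵢ'
  have hBD : ∀ D' : V, Collinear ℝ ({A, D, D'} : Set V) → B ≠ D' := by
    intro D' hcol h
    subst h
    have cABD : Collinear ℝ ({A, B, D} : Set V) :=
      perm hcol (by intro x hx; simp at hx ⊢; tauto)
    have trivAB : Collinear ℝ ({A, B, A} : Set V) :=
      perm (collinear_pair ℝ A B) (by intro x hx; simp at hx ⊢; tauto)
    have trivAB' : Collinear ℝ ({A, B, B} : Set V) :=
      perm (collinear_pair ℝ A B) (by intro x hx; simp at hx ⊢; tauto)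
    have cCDA : Collinear ℝ ({C, D, A} : Set V) := coll_key hAB cABC cABD trivAB
    have cCDB : Collinear ℝ ({C, D, B} : Set V) := coll_key hAB cABC cABD trivAB'
    have cCDO : Collinear ℝ ({C, D, O} : Set V) :=
      perm cCOD (by intro x hx; simp at hx ⊢; tauto)
    exact hncol (coll_key hCD cCDA cCDB cCDO)
  have hBD₁ : B ≠ D₁' := hBD D₁' h₁col₃
  -- D₁' = D₂'
  have hDD : D₁' = D₂' := by
    by_contra hD
    have c1 : Collinear ℝ ({C, N, D₁'} : Set V) :=
      perm h₁col₁ (by intro x hx; simp at hx ⊢; tauto)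
    have c2 : Collinear ℝ ({C, N, D₂'} : Set V) :=
      perm h₂col₁ (by intro x hx; simp at hx ⊢; tauto)
    have trivCN : Collinear ℝ ({C, N, C} : Set V) :=
      perm (collinear_pair ℝ C N) (by intro x hx; simp at hx ⊢; tauto)
    have c3 : Collinear ℝ ({A, D, D₁'} : Set V) := h₁col₃
    have c4 : Collinear ℝ ({A, D, D₂'} : Set V) := h₂col₃
    have trivAD : Collinear ℝ ({A, D, A} : Set V) :=
      perm (collinear_pair ℝ A D) (by intro x hx; simp at hx ⊢; tauto)
    have trivAD' : Collinear ℝ ({A, D, D} : Set V) :=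
      perm (collinear_pair ℝ A D) (by intro x hx; simp at hx ⊢; tauto)
    have cDDC : Collinear ℝ ({D₁', D₂', C} : Set V) := coll_key hCN c1 c2 trivCN
    have cDDA : Collinear ℝ ({D₁', D₂', A} : Set V) := coll_key hAD c3 c4 trivAD
    have cDDD : Collinear ℝ ({D₁', D₂', D} : Set V) := coll_key hAD c3 c4 trivAD'
    have cCAD : Collinear ℝ ({C, A, D} : Set V) := coll_key hD cDDC cDDA cDDD
    have cCDA : Collinear ℝ ({C, D, A} : Set V) :=
      perm cCAD (by intro x hx; simp at hx ⊢; tauto)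
    have cCDO : Collinear ℝ ({C, D, O} : Set V) :=
      perm cCOD (by intro x hx; simp at hx ⊢; tauto)
    have trivCD : Collinear ℝ ({C, D, C} : Set V) :=
      perm (collinear_pair ℝ C D) (by intro x hx; simp at hx ⊢; tauto)
    have cAOC : Collinear ℝ ({A, O, C} : Set V) := coll_key hCD cCDA cCDO trivCD
    have cACO : Collinear ℝ ({A, C, O} : Set V) :=
      perm cAOC (by intro x hx; simp at hx ⊢; tauto)
    exact hncol (coll_key hAC trivAC cACB cACO)
  subst hDD
  -- finally, S₁ = S₂
  by_contra hS
  have c1 : Collinear ℝ ({B, D₁', S₁} : Set V) := h₁col₂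
  have c2 : Collinear ℝ ({B, D₁', S₂} : Set V) := h₂col₂
  have trivBD : Collinear ℝ ({B, D₁', B} : Set V) :=
    perm (collinear_pair ℝ B D₁') (by intro x hx; simp at hx ⊢; tauto)
  have cSSB : Collinear ℝ ({S₁, S₂, B} : Set V) := coll_key hBD₁ c1 c2 trivBD
  have d1 : Collinear ℝ ({A, O, S₁} : Set V) :=
    perm h₁btw₁.wbtw.collinear (by intro x hx; simp at hx ⊢; tauto)
  have d2 : Collinear ℝ ({A, O, S₂} : Set V) :=
    perm h₂btw₁.wbtw.collinear (by intro x hx; simp at hx ⊢; tauto)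
  have trivAO : Collinear ℝ ({A, O, A} : Set V) :=
    perm (collinear_pair ℝ A O) (by intro x hx; simp at hx ⊢; tauto)
  have trivAO' : Collinear ℝ ({A, O, O} : Set V) :=
    perm (collinear_pair ℝ A O) (by intro x hx; simp at hx ⊢; tauto)
  have cSSA : Collinear ℝ ({S₁, S₂, A} : Set V) := coll_key hAO d1 d2 trivAO
  have cSSO : Collinear ℝ ({S₁, S₂, O} : Set V) := coll_key hAO d1 d2 trivAO'
  have : Collinear ℝ ({B, A, O} : Set V) := coll_key hS cSSB cSSA cSSO
  exact hncol (perm this (by intro x hx; simp at hx ⊢; tauto))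
end
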